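/- For the tacnode singularity O = k[[x,y]]/(y² - x⁴) with normalization Õ = k[[t]] × k[[t]] (via x ↦ (t,t), y ↦ (t²,-t²)), the quotient Õ*/O* is isomorphic to k* ⊕ k⁺, via (f,g) ↦ (f(0)/g(0), f'(0)/f(0) - g'(0)/g(0)), where f' denotes the formal derivative. -/

import Mathlib

/-!
STATEMENT 2: For the tacnode O = k[[x,y]]/(y² - x⁴) with normalization
Õ = k[[t]] × k[[t]] (x ↦ (t,t), y ↦ (t²,-t²)), the quotient Õ*/O* is isomorphic
to k* ⊕ k⁺, via (f,g) ↦ (f(0)/g(0), f'(0)/f(0) - g'(0)/g(0)).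

In characteristic 0, the image of O in Õ is the subring of pairs (f,g) with
f(0) = g(0) and f'(0) = g'(0).
-/

open PowerSeries

variable (k : Type*) [Field k] [IsAlgClosed k] [CharZero k]

/-- The tacnode `k[[x,y]]/(y²-x⁴)` as a subring of its normalization
`k[[t]] × k[[t]]`: pairs agreeing to first order. -/
noncomputable def tacnodeSubring : Subring (PowerSeries k × PowerSeries k) where
  carrier := {p | constantCoeff (R := k) p.1 = constantCoeff (R := k) p.2 ∧ coeff (R := k) 1 p.1 = coeff (R := k) 1 p.2}
  zero_mem' := by simp
  one_mem' := by simp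
  add_mem' := by
    rintro a b ⟨ha0, ha1⟩ ⟨hb0, hb1⟩
    constructor <;> simp only [Prod.fst_add, Prod.snd_add, map_add, ha0, ha1, hb0, hb1]
  neg_mem' := by
    rintro a ⟨h0, h1⟩
    constructor <;> simp only [Prod.fst_neg, Prod.snd_neg, map_neg, h0, h1]
  mul_mem' := by
    rintro a b ⟨ha0, ha1⟩ ⟨hb0, hb1⟩
    constructor
    · simp only [Prod.fst_mul, Prod.snd_mul, map_mul, ha0, hb0]
    · simp only [Prod.fst_mul, Prod.snd_mul]
      rw [coeff_mul, coeff_mul, Finset.Nat.sum_antidiagonal_eq_sum_range_succ_mk,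
        Finset.Nat.sum_antidiagonal_eq_sum_range_succ_mk]
      simp [Finset.sum_range_succ, ha0, ha1, hb0, hb1, coeff_zero_eq_constantCoeff]
  
/-- The unit group `O*` of the tacnode as a subgroup of `Õ*`. -/
noncomputable def tacnodeUnits : Subgroup (PowerSeries k × PowerSeries k)ˣ where
  carrier := {u | (u : PowerSeries k × PowerSeries k) ∈ tacnodeSubring k ∧
    ((u⁻¹ : (PowerSeries k × PowerSeries k)ˣ) : PowerSeries k × PowerSeries k) ∈ tacnodeSubring k}
  one_mem' := ⟨(tacnodeSubring k).one_mem, by simpa using (tacnodeSubring k).one_mem⟩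
  mul_mem' := by
    rintro a b ⟨ha1, ha2⟩ ⟨hb1, hb2⟩
    refine ⟨(tacnodeSubring k).mul_mem ha1 hb1, ?_⟩
    rw [mul_inv_rev]
    exact (tacnodeSubring k).mul_mem hb2 ha2
  inv_mem' := by
    rintro a ⟨h1, h2⟩
    exact ⟨h2, by simpa using h1⟩

section Aux

lemma tac_cc_ne (u : (PowerSeries k × PowerSeries k)ˣ) :
    constantCoeff (R := k) (u : PowerSeries k × PowerSeries k).1 ≠ 0 ∧
    constantCoeff (R := k) (u : PowerSeries k × PowerSeries k).2 ≠ 0 := by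
  have h := u.mul_inv
  have h1 := congrArg (fun p => constantCoeff (R := k) p.1) h
  have h2 := congrArg (fun p => constantCoeff (R := k) p.2) h
  simp only [Prod.fst_mul, Prod.snd_mul, map_mul, Prod.fst_one, Prod.snd_one, map_one] at h1 h2
  exact ⟨left_ne_zero_of_mul_eq_one h1, left_ne_zero_of_mul_eq_one h2⟩

/-- The homomorphism Õ* → k* × k⁺. -/
noncomputable def tacPhi : (PowerSeries k × PowerSeries k)ˣ →* kˣ × Multiplicative k where
  toFun u := (Units.mk0
      (constantCoeff (R := k) (u : PowerSeries k × PowerSeries k).1 /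
        constantCoeff (R := k) (u : PowerSeries k × PowerSeries k).2)
      (div_ne_zero (tac_cc_ne k u).1 (tac_cc_ne k u).2),
    Multiplicative.ofAdd
      (coeff (R := k) 1 (u : PowerSeries k × PowerSeries k).1 /
        constantCoeff (R := k) (u : PowerSeries k × PowerSeries k).1 -
       coeff (R := k) 1 (u : PowerSeries k × PowerSeries k).2 /
        constantCoeff (R := k) (u : PowerSeries k × PowerSeries k).2))
  map_one' := by
    refine Prod.ext (Units.ext ?_) ?_ <;> simp
  map_mul' u v := by
    obtain ⟨hu1, hu2⟩ := tac_cc_ne k u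
    obtain ⟨hv1, hv2⟩ := tac_cc_ne k v
    refine Prod.ext (Units.ext ?_) ?_
    · simp only [Units.val_mk0, Units.val_mul, Units.mul_inv, Prod.fst_mul, Prod.snd_mul,
        map_mul]
      field_simp
    · simp only [Prod.snd_mul, ← ofAdd_add]
      congr 1
      simp only [Units.val_mul, Prod.fst_mul, Prod.snd_mul, map_mul, coeff_one_mul]
      field_simp
      ring

lemma tacPhi_eq_one_iff (u : (PowerSeries k × PowerSeries k)ˣ) :
    tacPhi k u = 1 ↔ (u : PowerSeries k × PowerSeries k) ∈ tacnodeSubring k := by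
  obtain ⟨h1, h2⟩ := tac_cc_ne k u
  constructor
  · intro h
    have hfst := congrArg (fun p : kˣ × Multiplicative k => (p.1 : k)) h
    have hsnd := congrArg (fun p : kˣ × Multiplicative k => Multiplicative.toAdd p.2) h
    simp only [tacPhi, MonoidHom.coe_mk, OneHom.coe_mk, Units.val_mk0, Prod.fst_one,
      Units.val_one, Prod.snd_one, toAdd_ofAdd, toAdd_one] at hfst hsnd
    have hc : constantCoeff (R := k) (u : PowerSeries k × PowerSeries k).1 =
        constantCoeff (R := k) (u : PowerSeries k × PowerSeries k).2 :=
      (div_eq_one_iff_eq h2).mp hfst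
    refine ⟨hc, ?_⟩
    have := sub_eq_zero.mp hsnd
    rw [hc] at this
    have h3 := (div_eq_div_iff h2 h2).mp this
    exact mul_right_cancel₀ h2 h3
  · rintro ⟨hc, ha⟩
    refine Prod.ext (Units.ext ?_) ?_
    · simp only [tacPhi, MonoidHom.coe_mk, OneHom.coe_mk, Units.val_mk0, Prod.fst_one,
        Units.val_one]
      rw [hc]; exact div_self h2
    · simp only [tacPhi, MonoidHom.coe_mk, OneHom.coe_mk, Prod.snd_one]
      rw [hc, ha, sub_self, ofAdd_zero]

lemma tacPhi_ker : (tacPhi k).ker = tacnodeUnits k := by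
  ext u
  constructor
  · intro h
    have h' : tacPhi k u⁻¹ = 1 := by rw [map_inv, h, inv_one]
    exact ⟨(tacPhi_eq_one_iff k u).mp h, (tacPhi_eq_one_iff k u⁻¹).mp h'⟩
  · intro h
    exact (tacPhi_eq_one_iff k u).mpr h.1

lemma tacPhi_surjective : Function.Surjective (tacPhi k) := by
  rintro ⟨α, b⟩
  set f : PowerSeries k := PowerSeries.C (R := k) (α : k) + PowerSeries.C (R := k) ((α : k) * Multiplicative.toAdd b) * PowerSeries.X with hf
  have hfc : constantCoeff (R := k) f = (α : k) := by simp [hf]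
  have hf1 : coeff (R := k) 1 f = (α : k) * Multiplicative.toAdd b := by simp [hf]
  have hfu : IsUnit f := by
    rw [PowerSeries.isUnit_iff_constantCoeff, hfc]
    exact α.isUnit
  refine ⟨MulEquiv.prodUnits.symm (hfu.unit, 1), ?_⟩
  have hval : ((MulEquiv.prodUnits.symm (hfu.unit, 1) : (PowerSeries k × PowerSeries k)ˣ) :
      PowerSeries k × PowerSeries k) = (f, 1) := by
    simp [MulEquiv.prodUnits]
  refine Prod.ext (Units.ext ?_) ?_
  · simp only [tacPhi, MonoidHom.coe_mk, OneHom.coe_mk, Units.val_mk0, hval]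
    simp [hfc]
  · simp only [tacPhi, MonoidHom.coe_mk, OneHom.coe_mk, hval]
    simp only [map_one, coeff_one, hfc, hf1]
    rw [if_neg one_ne_zero, zero_div, sub_zero, mul_div_cancel_left₀ _ α.ne_zero, ofAdd_toAdd]

end Aux

/-- Õ*/O* ≅ k* ⊕ k⁺, induced by
(f,g) ↦ (f(0)/g(0), f'(0)/f(0) - g'(0)/g(0)). -/
theorem tacnode_units_quotient_iso :
    ∃ e : ((PowerSeries k × PowerSeries k)ˣ ⧸ tacnodeUnits k) ≃* kˣ × Multiplicative k,
      ∀ u : (PowerSeries k × PowerSeries k)ˣ,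
        (((e (QuotientGroup.mk u)).1 : k) =
          constantCoeff (R := k) (u : PowerSeries k × PowerSeries k).1 /
            constantCoeff (R := k) (u : PowerSeries k × PowerSeries k).2) ∧
        (Multiplicative.toAdd (e (QuotientGroup.mk u)).2 =
          coeff (R := k) 1 (u : PowerSeries k × PowerSeries k).1 /
            constantCoeff (R := k) (u : PowerSeries k × PowerSeries k).1 -
          coeff (R := k) 1 (u : PowerSeries k × PowerSeries k).2 /
            constantCoeff (R := k) (u : PowerSeries k × PowerSeries k).2) := by
  haveI : (tacnodeUnits k).Normal := (tacPhi_ker k) ▸ (tacPhi k).normal_ker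
  refine ⟨(QuotientGroup.quotientMulEquivOfEq (tacPhi_ker k).symm).trans
      (QuotientGroup.quotientKerEquivOfSurjective _ (tacPhi_surjective k)), fun u => ?_⟩
  have he : ((QuotientGroup.quotientMulEquivOfEq (tacPhi_ker k).symm).trans
      (QuotientGroup.quotientKerEquivOfSurjective _ (tacPhi_surjective k)))
      (QuotientGroup.mk u) = tacPhi k u := rfl
  rw [he]
  exact ⟨rfl, rfl⟩
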